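/- (Lemma 1(i)) There exists an index i ∈ {1,…,n} such that b_{i,n} = 0. -/

import Mathlib

/-!
STATEMENT 7 (Lemma 1(i)). Fix `n ≥ 2` and a real `n`-tuple `a` with `∑ a = 0`.
Indexing `a` cyclically (`Fin n` indices, so the paper's 1-based start index `i`
corresponds to the `Fin n` index `i - 1`), define `b_{i,0} = 0` and
`b_{i,j+1} = max{b_{i,j} + a_{i+j}, 0}`. Then there is an index `i` with
`b_{i,n} = 0`.
-/

/-- The buffer sequence `(b_{i,j})_{j≥0}` built from `a`, starting cyclically at
index `i`: `b_{i,0} = 0`, `b_{i,j+1} = max{b_{i,j} + a_{σ_i(j+1)}, 0}` where the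
cyclic index `σ_i(j+1)` is `i + j` in `Fin n`. -/
noncomputable def bseq {n : ℕ} [NeZero n] (a : Fin n → ℝ) (i : Fin n) : ℕ → ℝ
  | 0 => 0
  | j + 1 => max (bseq a i j + a (i + (Fin.ofNat n j))) 0

open Fin.NatCast

theorem exists_start_index_bseq_eq_zero {n : ℕ} [NeZero n] (hn : 2 ≤ n)
    (a : Fin n → ℝ) (ha : ∑ m, a m = 0) :
    ∃ i : Fin n, bseq a i n = 0 := by
  set Q : ℕ → ℝ := fun j => ∑ k ∈ Finset.range j, a (k : Fin n) with hQ
  have hnpos : 0 < n := Nat.pos_of_ne_zero (NeZero.ne n)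
  -- one full period sums to zero
  have hper : ∀ j, Q (j + n) = Q j := by
    intro j
    have h1 : Q (j + n) = Q j + ∑ k ∈ Finset.range n, a ((j + k : ℕ) : Fin n) := by
      simp [hQ, Finset.sum_range_add]
    have h2 : ∑ k ∈ Finset.range n, a ((j + k : ℕ) : Fin n) = 0 := by
      rw [← Fin.sum_univ_eq_sum_range (fun k => a ((j + k : ℕ) : Fin n)) n]
      have : ∀ x : Fin n, a ((j + (x : ℕ) : ℕ) : Fin n) = a ((Equiv.addLeft ((j : ℕ) : Fin n)) x) := by
        intro x
        congr 1
        push_cast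
        simp [Equiv.addLeft]
      rw [Finset.sum_congr rfl (fun x _ => this x), Equiv.sum_comp]
      exact ha
    rw [h1, h2, add_zero]
  have hmod : ∀ j, Q j = Q (j % n) := by
    intro j
    induction j using Nat.strong_induction_on with
    | _ j ih =>
      by_cases h : j < n
      · rw [Nat.mod_eq_of_lt h]
      · push_neg at h
        obtain ⟨m, rfl⟩ := Nat.exists_eq_add_of_le h
        rw [add_comm n m, hper m, ih m (by omega), Nat.add_mod_right]
  -- pick argmin of Q over one period
  obtain ⟨i0, hi0n, hi0min⟩ :=
    Finset.exists_min_image (Finset.range n) Q ⟨0, Finset.mem_range.mpr hnpos⟩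
  rw [Finset.mem_range] at hi0n
  have hminall : ∀ m, Q i0 ≤ Q m := by
    intro m
    rw [hmod m]
    exact hi0min _ (Finset.mem_range.mpr (Nat.mod_lt _ hnpos))
  set i : Fin n := ⟨i0, hi0n⟩ with hi
  have hicast : i = ((i0 : ℕ) : Fin n) := by
    ext
    simp [hi, Fin.val_cast_of_lt hi0n]
  -- main induction
  have key : ∀ j, bseq a i j ≤ Q (i0 + j) - Q i0 := by
    intro j
    induction j with
    | zero => simp [bseq]
    | succ j ih =>
      have hQstep : Q (i0 + (j + 1)) = Q (i0 + j) + a ((i0 + j : ℕ) : Fin n) := by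
        simp [hQ, ← add_assoc, Finset.sum_range_succ]
      have hidx : i + (j : Fin n) = ((i0 + j : ℕ) : Fin n) := by
        rw [hicast]; push_cast; rfl
      show max (bseq a i j + a (i + (j : Fin n))) 0 ≤ _
      rw [hidx]
      apply max_le
      · rw [hQstep]; linarith
      · have := hminall (i0 + (j + 1)); linarith
  refine ⟨i, le_antisymm ?_ ?_⟩
  · have := key n
    rw [hper i0] at this
    linarith
  · obtain ⟨m, rfl⟩ : ∃ m, n = m + 1 := ⟨n - 1, by omega⟩
    exact le_max_right _ _
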